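/- arXiv:2001.01427 — 2 statements merged into one kernel-verified Lean document; each statement's English description precedes it below -/
import Mathlib

section
/- Let λ ∈ Γ_k for some k ∈ {1,…,n}, and suppose λ_1 ≥ λ_2 ≥ ⋯ ≥ λ_n. Then λ_1 ≥ λ_2 ≥ ⋯ ≥ λ_k > 0 and σ_k(λ) ≤ C(n,k) λ_1 λ_2 ⋯ λ_k, where C(n,k) = n!/(k!(n−k)!). -/
open Finset Set

noncomputable section

/-- `sigmaV m lam`: the m-th elementary symmetric function σ_m(λ) (σ_0 = 1). -/
def sigmaV {n : ℕ} (m : ℕ) (lam : Fin n → ℝ) : ℝ :=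
  ∑ s ∈ Finset.powersetCard m Finset.univ, ∏ i ∈ s, lam i

/-- σ_m(λ|i): σ_m of the vector λ with the i-th entry set to zero. -/
def sigmaVd {n : ℕ} (m : ℕ) (i : Fin n) (lam : Fin n → ℝ) : ℝ :=
  sigmaV m (Function.update lam i 0)

/-- The Gårding cone Γ_k : σ_m(λ) > 0 for all 1 ≤ m ≤ k. -/
def GammaV {n : ℕ} (k : ℕ) (lam : Fin n → ℝ) : Prop :=
  ∀ m, 1 ≤ m → m ≤ k → 0 < sigmaV m lam

/-- σ_m of a matrix: the sum of its m×m principal minors (equivalently, the m-th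
elementary symmetric function σ_m(λ(A)) of its eigenvalues). -/
def sigmaM {n : ℕ} (m : ℕ) (A : Fin n → Fin n → ℝ) : ℝ :=
  ∑ s ∈ Finset.powersetCard m Finset.univ,
    Matrix.det ((Matrix.of A).submatrix (fun i : ↥s => i.1) (fun i : ↥s => i.1))

/-- λ(A) ∈ Γ_k, expressed via principal minors: σ_m(A) > 0 for all 1 ≤ m ≤ k. -/
def GammaM {n : ℕ} (k : ℕ) (A : Fin n → Fin n → ℝ) : Prop :=
  ∀ m, 1 ≤ m → m ≤ k → 0 < sigmaM m A

/-- Partial derivative ∂u/∂x_i. -/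
def pd {n : ℕ} (i : Fin n) (u : (Fin n → ℝ) → ℝ) : (Fin n → ℝ) → ℝ :=
  fun x => fderiv ℝ u x (Pi.single i 1)

/-- The gradient Du. -/
def gradV {n : ℕ} (u : (Fin n → ℝ) → ℝ) (x : Fin n → ℝ) : Fin n → ℝ :=
  fun i => pd i u x

/-- The Hessian D²u. -/
def hessM {n : ℕ} (u : (Fin n → ℝ) → ℝ) (x : Fin n → ℝ) : Fin n → Fin n → ℝ :=
  fun i j => pd j (pd i u) x

/-- Euclidean inner product. -/
def dotV {n : ℕ} (a b : Fin n → ℝ) : ℝ := ∑ i, a i * b i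

/-- Euclidean norm. -/
def normV {n : ℕ} (a : Fin n → ℝ) : ℝ := Real.sqrt (dotV a a)

/-- Frobenius norm of a matrix (used for |D²u|). -/
def normM {n : ℕ} (A : Fin n → Fin n → ℝ) : ℝ := Real.sqrt (∑ i, ∑ j, (A i j)^2)

/-- `ν` is the outer unit normal to the convex domain Ω at the boundary point x:
the unit vector with ⟨y − x, ν⟩ ≤ 0 for all y ∈ closure Ω. -/
def IsOuterNormalAt {n : ℕ} (Ω : Set (Fin n → ℝ)) (x ν : Fin n → ℝ) : Prop :=
  normV ν = 1 ∧ ∀ y ∈ closure Ω, dotV (y - x) ν ≤ 0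

/-- Ω is a domain of boundary regularity Cᵐ: it is the sublevel set of a Cᵐ defining
function whose gradient does not vanish on the boundary. -/
def BoundaryRegular {n : ℕ} (Ω : Set (Fin n → ℝ)) (m : WithTop ℕ∞) : Prop :=
  ∃ ρ : (Fin n → ℝ) → ℝ, ContDiff ℝ m ρ ∧ Ω = {x | ρ x < 0} ∧
    frontier Ω = {x | ρ x = 0} ∧ ∀ x ∈ frontier Ω, gradV ρ x ≠ 0

/-- Euclidean distance d(x) = dist(x, ∂Ω). -/
def distBd {n : ℕ} (Ω : Set (Fin n → ℝ)) (x : Fin n → ℝ) : ℝ :=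
  sInf ((fun y => normV (x - y)) '' frontier Ω)

/-- The collar Ω_μ = {x ∈ Ω : dist(x, ∂Ω) < μ}. -/
def collar {n : ℕ} (Ω : Set (Fin n → ℝ)) (μ : ℝ) : Set (Fin n → ℝ) :=
  {x ∈ Ω | distBd Ω x < μ}

/-- The quadratic form A(v,v) = Σ_{ij} A_{ij} v_i v_j. -/
def quadF {n : ℕ} (A : Fin n → Fin n → ℝ) (v : Fin n → ℝ) : ℝ :=
  ∑ i, ∑ j, A i j * v i * v j

/-- Time derivative u_t(x,t). -/
def ut {n : ℕ} (u : ℝ → (Fin n → ℝ) → ℝ) (x : Fin n → ℝ) (t : ℝ) : ℝ :=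
  deriv (fun s => u s x) t

/-- ∂[σ_k(λ)/σ_l(λ)]/∂λ_i, via the explicit formula
(σ_{k−1}(λ|i)σ_l(λ) − σ_k(λ)σ_{l−1}(λ|i))/σ_l(λ)², with σ_{−1} := 0. -/
def dQuotV {n : ℕ} (k l : ℕ) (i : Fin n) (lam : Fin n → ℝ) : ℝ :=
  (sigmaVd (k-1) i lam * sigmaV l lam
    - sigmaV k lam * (if l = 0 then 0 else sigmaVd (l-1) i lam)) / (sigmaV l lam)^2

/-- σ_m(A|i): σ_m of the matrix A with the i-th row and column deleted, i.e. the sum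
of the m×m principal minors avoiding index i. -/
def sigmaMd {n : ℕ} (m : ℕ) (i : Fin n) (A : Fin n → Fin n → ℝ) : ℝ :=
  ∑ s ∈ (Finset.powersetCard m Finset.univ).filter (fun s => i ∉ s),
    Matrix.det ((Matrix.of A).submatrix (fun j : ↥s => j.1) (fun j : ↥s => j.1))

/-- ∂[σ_k(A)/σ_l(A)]/∂a_{ii}, via ∂σ_m(A)/∂a_{ii} = σ_{m−1}(A|i) (σ_{−1} := 0):
(σ_{k−1}(A|i)σ_l(A) − σ_k(A)σ_{l−1}(A|i))/σ_l(A)². -/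
def dQuotM {n : ℕ} (k l : ℕ) (i : Fin n) (A : Fin n → Fin n → ℝ) : ℝ :=
  (sigmaMd (k-1) i A * sigmaM l A
    - sigmaM k A * (if l = 0 then 0 else sigmaMd (l-1) i A)) / (sigmaM l A)^2

/-- F^{ij}: the derivative of B ↦ log(σ_k(B)/σ_l(B)) at A in the matrix direction
E_{ij} (the derivative of log(σ_k/σ_l) with respect to the (i,j) entry). -/
def Fcoef {n : ℕ} (k l : ℕ) (i j : Fin n) (A : Fin n → Fin n → ℝ) : ℝ :=
  fderiv ℝ (fun B : Fin n → Fin n → ℝ => Real.log (sigmaM k B / sigmaM l B)) A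
    (Pi.single i (Pi.single j 1))

end

lemma sigmaV_zero {n : ℕ} (lam : Fin n → ℝ) : sigmaV 0 lam = 1 := by
  simp [sigmaV]

lemma sigmaV_top {n : ℕ} (lam : Fin n → ℝ) : sigmaV n lam = ∏ i, lam i := by
  unfold sigmaV
  have h := Finset.powersetCard_self (univ : Finset (Fin n))
  rw [Finset.card_fin] at h
  rw [h, Finset.sum_singleton]

lemma sigmaV_eq_zero {n m : ℕ} (h : n < m) (lam : Fin n → ℝ) : sigmaV m lam = 0 := by
  unfold sigmaV
  rw [Finset.powersetCard_eq_empty.2 (by simpa using h)]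
  simp

lemma sigmaV_pos_of_pos {n m : ℕ} (h : m ≤ n) (lam : Fin n → ℝ) (hpos : ∀ i, 0 < lam i) :
    0 < sigmaV m lam := by
  unfold sigmaV
  apply Finset.sum_pos
  · intro s hs
    exact Finset.prod_pos fun i _ => hpos i
  · exact Finset.powersetCard_nonempty_of_le (by simpa using h)

lemma sum_powersetCard_map {n : ℕ} (m : ℕ) (lam : Fin (n+1) → ℝ) :
    ∑ s ∈ Finset.powersetCard m ((univ : Finset (Fin n)).map Fin.castSuccEmb), ∏ i ∈ s, lam i
      = sigmaV m (lam ∘ Fin.castSucc) := by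
  rw [Finset.powersetCard_map, Finset.sum_map]
  unfold sigmaV
  refine Finset.sum_congr rfl fun s _ => ?_
  show ∏ i ∈ s.map Fin.castSuccEmb, lam i = _
  rw [Finset.prod_map]
  rfl

lemma sigmaV_rec {n : ℕ} (m : ℕ) (lam : Fin (n+1) → ℝ) :
    sigmaV (m+1) lam = sigmaV (m+1) (lam ∘ Fin.castSucc)
      + lam (Fin.last n) * sigmaV m (lam ∘ Fin.castSucc) := by
  have hx : Fin.last n ∉ (univ : Finset (Fin n)).map Fin.castSuccEmb := by
    simp only [Finset.mem_map, Finset.mem_univ, true_and]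
    rintro ⟨a, ha⟩
    exact absurd ha (ne_of_lt (Fin.castSucc_lt_last a))
  have huniv : (univ : Finset (Fin (n+1)))
      = insert (Fin.last n) ((univ : Finset (Fin n)).map Fin.castSuccEmb) := by
    rw [Fin.univ_castSuccEmb, Finset.cons_eq_insert]
  have hdisj : Disjoint
      (Finset.powersetCard (m+1) ((univ : Finset (Fin n)).map Fin.castSuccEmb))
      ((Finset.powersetCard m ((univ : Finset (Fin n)).map Fin.castSuccEmb)).image
        (insert (Fin.last n))) := by
    rw [Finset.disjoint_left]
    intro s hs hs2
    have hls : Fin.last n ∉ s := fun h => hx ((Finset.mem_powersetCard.1 hs).1 h)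
    obtain ⟨t, _, rfl⟩ := Finset.mem_image.1 hs2
    exact hls (Finset.mem_insert_self _ _)
  have step : sigmaV (m+1) lam
      = (∑ s ∈ Finset.powersetCard (m+1) ((univ : Finset (Fin n)).map Fin.castSuccEmb),
          ∏ i ∈ s, lam i)
        + ∑ s ∈ (Finset.powersetCard m ((univ : Finset (Fin n)).map Fin.castSuccEmb)).image
            (insert (Fin.last n)), ∏ i ∈ s, lam i := by
    unfold sigmaV
    rw [huniv, Finset.powersetCard_succ_insert hx, Finset.sum_union hdisj]
  rw [step, sum_powersetCard_map (m+1) lam]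
  congr 1
  rw [Finset.sum_image]
  · rw [← sum_powersetCard_map m lam, Finset.mul_sum]
    refine Finset.sum_congr rfl fun s hs => ?_
    have hls : Fin.last n ∉ s := fun h => hx ((Finset.mem_powersetCard.1 hs).1 h)
    rw [Finset.prod_insert hls]
  · intro s hs t ht hst
    have hls : Fin.last n ∉ s := fun h => hx ((Finset.mem_powersetCard.1 hs).1 h)
    have hlt : Fin.last n ∉ t := fun h => hx ((Finset.mem_powersetCard.1 ht).1 h)
    rw [← Finset.erase_insert hls, hst, Finset.erase_insert hlt]

lemma filter_lt_eq {n k : ℕ} (hk : k ≤ n) :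
    (univ : Finset (Fin (n+1))).filter (fun i : Fin (n+1) => (i:ℕ) < k)
      = ((univ : Finset (Fin n)).filter (fun i : Fin n => (i:ℕ) < k)).map Fin.castSuccEmb := by
  ext a
  simp only [Finset.mem_filter, Finset.mem_univ, true_and, Finset.mem_map]
  constructor
  · intro ha
    refine ⟨⟨a.1, by omega⟩, by simp [ha], ?_⟩
    ext
    simp [Fin.castSuccEmb]
  · rintro ⟨b, hb, rfl⟩
    simpa [Fin.castSuccEmb] using hb

lemma prod_filter_lt_eq {n k : ℕ} (hk : k ≤ n) (lam : Fin (n+1) → ℝ) :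
    ∏ i ∈ (univ : Finset (Fin (n+1))).filter (fun i : Fin (n+1) => (i:ℕ) < k), lam i
      = ∏ i ∈ (univ : Finset (Fin n)).filter (fun i : Fin n => (i:ℕ) < k), (lam ∘ Fin.castSucc) i := by
  rw [filter_lt_eq hk, Finset.prod_map]
  rfl

lemma filter_lt_succ {N j : ℕ} (hj : j < N) :
    (univ : Finset (Fin N)).filter (fun i : Fin N => (i:ℕ) < j+1)
      = insert (⟨j, hj⟩ : Fin N) ((univ : Finset (Fin N)).filter (fun i : Fin N => (i:ℕ) < j)) := by
  ext a
  simp only [Finset.mem_filter, Finset.mem_univ, true_and, Finset.mem_insert, Fin.ext_iff]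
  omega

lemma aux_main (n : ℕ) : ∀ k : ℕ, k ≤ n → ∀ lam : Fin n → ℝ,
    (∀ i j : Fin n, i ≤ j → lam j ≤ lam i) →
    (∀ m, 1 ≤ m → m ≤ k → 0 < sigmaV m lam) →
    (∀ i : Fin n, (i : ℕ) < k → 0 < lam i) ∧
    sigmaV k lam ≤ (n.choose k : ℝ) *
      ∏ i ∈ Finset.univ.filter (fun i : Fin n => (i : ℕ) < k), lam i := by
  induction n with
  | zero =>
    intro k hk lam _ _
    interval_cases k
    refine ⟨fun i hi => absurd i.2 (by omega), ?_⟩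
    simp [sigmaV_zero]
  | succ n IH =>
    intro k hk lam hsort hΓ
    rcases Nat.eq_zero_or_pos k with rfl | hk1
    · refine ⟨fun i hi => absurd hi (by omega), ?_⟩
      have hemp : (univ : Finset (Fin (n+1))).filter (fun i : Fin (n+1) => (i:ℕ) < 0) = ∅ :=
        Finset.filter_false_of_mem (fun i _ => by omega)
      rw [sigmaV_zero, hemp, Finset.prod_empty, Nat.choose_zero_right]
      norm_num
    have hsortμ : ∀ i j : Fin n, i ≤ j →
        (lam ∘ Fin.castSucc) j ≤ (lam ∘ Fin.castSucc) i := by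
      intro i j hij
      exact hsort _ _ (Fin.castSucc_le_castSucc_iff.2 hij)
    by_cases hlast : 0 < lam (Fin.last n)
    · -- all entries positive
      have hpos : ∀ i : Fin (n+1), 0 < lam i :=
        fun i => lt_of_lt_of_le hlast (hsort i (Fin.last n) (Fin.le_last i))
      refine ⟨fun i _ => hpos i, ?_⟩
      rcases eq_or_lt_of_le hk with heq | hlt
      · -- k = n+1 : equality case
        subst heq
        rw [sigmaV_top]
        have hfilter : (univ : Finset (Fin (n+1))).filter (fun i : Fin (n+1) => (i:ℕ) < n+1) = (univ : Finset (Fin (n+1))) :=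
          Finset.filter_true_of_mem (fun i _ => i.2)
        rw [hfilter, Nat.choose_self]
        norm_num
      · have hkn : k ≤ n := by omega
        have hμpos : ∀ i : Fin n, 0 < (lam ∘ Fin.castSucc) i := fun i => hpos _
        have hΓμ : ∀ m, 1 ≤ m → m ≤ n → 0 < sigmaV m (lam ∘ Fin.castSucc) :=
          fun m _ hm => sigmaV_pos_of_pos hm _ hμpos
        obtain ⟨-, hB1⟩ := IH k hkn (lam ∘ Fin.castSucc) hsortμ
          (fun m h1 h2 => hΓμ m h1 (le_trans h2 hkn))
        obtain ⟨-, hB2⟩ := IH (k-1) (by omega) (lam ∘ Fin.castSucc) hsortμ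
          (fun m h1 h2 => hΓμ m h1 (by omega))
        have hrec := sigmaV_rec (k-1) lam
        rw [show k-1+1 = k by omega] at hrec
        rw [← prod_filter_lt_eq hkn lam] at hB1
        rw [← prod_filter_lt_eq (by omega : k-1 ≤ n) lam] at hB2
        have hins := filter_lt_succ (show k-1 < n+1 by omega)
        rw [show k-1+1 = k by omega] at hins
        have hnotmem : (⟨k-1, by omega⟩ : Fin (n+1)) ∉
            (univ : Finset (Fin (n+1))).filter (fun i : Fin (n+1) => (i:ℕ) < k-1) := by
          simp
        have hP1eq : ∏ i ∈ (univ : Finset (Fin (n+1))).filter (fun i : Fin (n+1) => (i:ℕ) < k), lam i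
            = lam ⟨k-1, by omega⟩ *
              ∏ i ∈ (univ : Finset (Fin (n+1))).filter (fun i : Fin (n+1) => (i:ℕ) < k-1), lam i := by
          rw [hins, Finset.prod_insert hnotmem]
        have hP0pos : 0 < ∏ i ∈ (univ : Finset (Fin (n+1))).filter
            (fun i : Fin (n+1) => (i:ℕ) < k-1), lam i := Finset.prod_pos (fun i _ => hpos i)
        have hlk : lam (Fin.last n) ≤ lam ⟨k-1, by omega⟩ := hsort _ _ (Fin.le_last _)
        have hchoose : ((n+1).choose k : ℝ) = (n.choose k : ℝ) + (n.choose (k-1) : ℝ) := by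
          rw [show k = (k-1)+1 by omega, Nat.choose_succ_succ]
          push_cast
          ring
        have hσpos : 0 < sigmaV (k-1) (lam ∘ Fin.castSucc) := by
          rcases Nat.eq_zero_or_pos (k-1) with h0 | hpos'
          · rw [h0, sigmaV_zero]; norm_num
          · exact hΓμ (k-1) hpos' (by omega)
        calc sigmaV k lam
            = sigmaV k (lam ∘ Fin.castSucc)
              + lam (Fin.last n) * sigmaV (k-1) (lam ∘ Fin.castSucc) := hrec
          _ ≤ (n.choose k : ℝ) *
                (∏ i ∈ (univ : Finset (Fin (n+1))).filter (fun i : Fin (n+1) => (i:ℕ) < k), lam i)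
              + lam (Fin.last n) * ((n.choose (k-1) : ℝ) *
                ∏ i ∈ (univ : Finset (Fin (n+1))).filter (fun i : Fin (n+1) => (i:ℕ) < k-1), lam i) := by
              have := mul_le_mul_of_nonneg_left hB2 hlast.le
              linarith
          _ ≤ (n.choose k : ℝ) *
                (∏ i ∈ (univ : Finset (Fin (n+1))).filter (fun i : Fin (n+1) => (i:ℕ) < k), lam i)
              + lam ⟨k-1, by omega⟩ * ((n.choose (k-1) : ℝ) *
                ∏ i ∈ (univ : Finset (Fin (n+1))).filter (fun i : Fin (n+1) => (i:ℕ) < k-1), lam i) := by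
              have h1 : (0:ℝ) ≤ (n.choose (k-1) : ℝ) *
                  ∏ i ∈ (univ : Finset (Fin (n+1))).filter (fun i : Fin (n+1) => (i:ℕ) < k-1), lam i :=
                mul_nonneg (by positivity) hP0pos.le
              nlinarith
          _ = ((n+1).choose k : ℝ) *
                ∏ i ∈ (univ : Finset (Fin (n+1))).filter (fun i : Fin (n+1) => (i:ℕ) < k), lam i := by
              rw [hchoose, hP1eq]
              ring
    · -- last entry nonpositive
      push_neg at hlast
      have claim : ∀ m, m ≤ k → 0 < sigmaV m (lam ∘ Fin.castSucc) ∧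
          (1 ≤ m → sigmaV m lam ≤ sigmaV m (lam ∘ Fin.castSucc)) := by
        intro m
        induction m with
        | zero =>
          intro _
          refine ⟨by rw [sigmaV_zero]; norm_num, by omega⟩
        | succ m ihm =>
          intro hmk
          have h1 := (ihm (by omega)).1
          have hrec := sigmaV_rec m lam
          have h2 : 0 < sigmaV (m+1) lam := hΓ (m+1) (by omega) hmk
          have h3 : lam (Fin.last n) * sigmaV m (lam ∘ Fin.castSucc) ≤ 0 :=
            mul_nonpos_of_nonpos_of_nonneg hlast h1.le
          exact ⟨by linarith, fun _ => by linarith⟩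
      rcases eq_or_lt_of_le hk with heq | hlt
      · exfalso
        have h1 := (claim k le_rfl).1
        have h0 : sigmaV k (lam ∘ Fin.castSucc) = 0 := sigmaV_eq_zero (by omega) _
        linarith
      · have hkn : k ≤ n := by omega
        have hΓμ : ∀ m, 1 ≤ m → m ≤ k → 0 < sigmaV m (lam ∘ Fin.castSucc) :=
          fun m _ hm => (claim m hm).1
        obtain ⟨hposμ, hB⟩ := IH k hkn (lam ∘ Fin.castSucc) hsortμ hΓμ
        have hposL : ∀ i : Fin (n+1), (i : ℕ) < k → 0 < lam i := by
          intro i hi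
          have hiv : i = Fin.castSucc ⟨i.1, by omega⟩ := by
            ext; simp
          rw [hiv]
          exact hposμ ⟨i.1, by omega⟩ hi
        refine ⟨hposL, ?_⟩
        rw [← prod_filter_lt_eq hkn lam] at hB
        have hPpos : 0 < ∏ i ∈ (univ : Finset (Fin (n+1))).filter
            (fun i : Fin (n+1) => (i:ℕ) < k), lam i := by
          apply Finset.prod_pos
          intro i hi
          exact hposL i (Finset.mem_filter.1 hi).2
        calc sigmaV k lam ≤ sigmaV k (lam ∘ Fin.castSucc) := (claim k le_rfl).2 hk1
          _ ≤ (n.choose k : ℝ) *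
              ∏ i ∈ (univ : Finset (Fin (n+1))).filter (fun i : Fin (n+1) => (i:ℕ) < k), lam i := hB
          _ ≤ ((n+1).choose k : ℝ) *
              ∏ i ∈ (univ : Finset (Fin (n+1))).filter (fun i : Fin (n+1) => (i:ℕ) < k), lam i := by
            apply mul_le_mul_of_nonneg_right _ hPpos.le
            exact_mod_cast Nat.choose_le_choose k (Nat.le_succ n)

/-- For λ ∈ Γ_k with λ_1 ≥ ⋯ ≥ λ_n, the first k entries are positive
and σ_k(λ) ≤ C(n,k) λ_1 ⋯ λ_k. -/
theorem statement_14 (n k : ℕ) (hk : 1 ≤ k) (hkn : k ≤ n)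
    (lam : Fin n → ℝ) (hΓ : GammaV k lam)
    (hsort : ∀ i j : Fin n, i ≤ j → lam j ≤ lam i) :
    (∀ i : Fin n, (i : ℕ) < k → 0 < lam i) ∧
    sigmaV k lam ≤ (n.choose k : ℝ) *
      ∏ i ∈ Finset.univ.filter (fun i : Fin n => (i : ℕ) < k), lam i := by
  exact aux_main n k hkn lam hsort (fun m h1 h2 => hΓ m h1 h2)
end

section
/- Let λ ∈ Γ_k for some k ∈ {1,…,n}, and suppose λ_1 ≥ λ_2 ≥ ⋯ ≥ λ_n. Then λ_1 σ_{k−1}(λ|1) ≥ (k/n) σ_k(λ). -/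
open Finset Set

section AuxLemmas
lemma sigmaVd_eq {n : ℕ} (m : ℕ) (i : Fin n) (lam : Fin n → ℝ) :
    sigmaVd m i lam = ∑ s ∈ Finset.powersetCard m (Finset.univ.erase i), ∏ j ∈ s, lam j := by
  unfold sigmaVd sigmaV
  rw [← Finset.sum_filter_add_sum_filter_not (Finset.powersetCard m Finset.univ) (fun s => i ∈ s)]
  have h1 : ∑ s ∈ (Finset.powersetCard m Finset.univ).filter (fun s => i ∈ s),
      ∏ j ∈ s, Function.update lam i 0 j = 0 := by
    apply Finset.sum_eq_zero
    intro s hs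
    simp only [Finset.mem_filter] at hs
    exact Finset.prod_eq_zero hs.2 (by simp)
  rw [h1, zero_add]
  have h2 : (Finset.powersetCard m Finset.univ).filter (fun s => ¬ i ∈ s)
      = Finset.powersetCard m (Finset.univ.erase i) := by
    ext s
    simp only [Finset.mem_filter, Finset.mem_powersetCard]
    constructor
    · rintro ⟨⟨hsub, hc⟩, hni⟩
      exact ⟨fun x hx => Finset.mem_erase.mpr ⟨fun h => hni (h ▸ hx), hsub hx⟩, hc⟩
    · rintro ⟨hsub, hc⟩
      exact ⟨⟨fun x hx => Finset.mem_univ x, hc⟩, fun hi => (Finset.mem_erase.mp (hsub hi)).1 rfl⟩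
  rw [h2]
  apply Finset.sum_congr rfl
  intro s hs
  apply Finset.prod_congr rfl
  intro j hj
  have : j ≠ i := (Finset.mem_erase.mp ((Finset.mem_powersetCard.mp hs).1 hj)).1
  simp [Function.update, this]

lemma sigmaV_succ {n : ℕ} (m : ℕ) (i : Fin n) (lam : Fin n → ℝ) :
    sigmaV (m+1) lam = lam i * sigmaVd m i lam + sigmaVd (m+1) i lam := by
  rw [sigmaVd_eq, sigmaVd_eq]
  unfold sigmaV
  rw [← Finset.sum_filter_add_sum_filter_not (Finset.powersetCard (m+1) Finset.univ) (fun s => i ∈ s)]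
  have h2 : (Finset.powersetCard (m+1) Finset.univ).filter (fun s => ¬ i ∈ s)
      = Finset.powersetCard (m+1) (Finset.univ.erase i) := by
    ext s
    simp only [Finset.mem_filter, Finset.mem_powersetCard]
    constructor
    · rintro ⟨⟨hsub, hc⟩, hni⟩
      exact ⟨fun x hx => Finset.mem_erase.mpr ⟨fun h => hni (h ▸ hx), hsub hx⟩, hc⟩
    · rintro ⟨hsub, hc⟩
      exact ⟨⟨fun x hx => Finset.mem_univ x, hc⟩, fun hi => (Finset.mem_erase.mp (hsub hi)).1 rfl⟩
  rw [h2]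
  congr 1
  rw [Finset.mul_sum]
  refine Finset.sum_bij' (fun s _ => s.erase i) (fun t _ => insert i t) ?hi ?hj ?li ?ri ?hval
  case hi =>
    intro s hs
    simp only [Finset.mem_filter, Finset.mem_powersetCard] at hs
    rw [Finset.mem_powersetCard]
    constructor
    · intro x hx
      rw [Finset.mem_erase] at hx ⊢
      exact ⟨hx.1, Finset.mem_univ x⟩
    · rw [Finset.card_erase_of_mem hs.2, hs.1.2]
      omega
  case hj =>
    intro t ht
    rw [Finset.mem_powersetCard] at ht
    have hit : i ∉ t := fun h => (Finset.mem_erase.mp (ht.1 h)).1 rfl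
    simp only [Finset.mem_filter, Finset.mem_powersetCard]
    refine ⟨⟨fun x _ => Finset.mem_univ x, ?_⟩, Finset.mem_insert_self i t⟩
    rw [Finset.card_insert_of_notMem hit, ht.2]
  case li =>
    intro s hs
    simp only [Finset.mem_filter] at hs
    exact Finset.insert_erase hs.2
  case ri =>
    intro t ht
    rw [Finset.mem_powersetCard] at ht
    have hit : i ∉ t := fun h => (Finset.mem_erase.mp (ht.1 h)).1 rfl
    exact Finset.erase_insert hit
  case hval =>
    intro s hs
    simp only [Finset.mem_filter] at hs
    exact (Finset.mul_prod_erase s lam hs.2).symm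
lemma sigmaVd_eq_filter {n : ℕ} (m : ℕ) (i : Fin n) (lam : Fin n → ℝ) :
    sigmaVd m i lam
      = ∑ s ∈ (Finset.powersetCard m (Finset.univ : Finset (Fin n))).filter (fun s => i ∉ s),
          ∏ j ∈ s, lam j := by
  rw [sigmaVd_eq]
  congr 1
  ext s
  simp only [Finset.mem_filter, Finset.mem_powersetCard]
  constructor
  · rintro ⟨hsub, hc⟩
    exact ⟨⟨fun x _ => Finset.mem_univ x, hc⟩, fun hi => (Finset.mem_erase.mp (hsub hi)).1 rfl⟩
  · rintro ⟨⟨hsub, hc⟩, hni⟩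
    exact ⟨fun x hx => Finset.mem_erase.mpr ⟨fun h => hni (h ▸ hx), Finset.mem_univ x⟩, hc⟩

-- I4
lemma sum_sigmaVd {n : ℕ} (m : ℕ) (lam : Fin n → ℝ) :
    ∑ i, sigmaVd m i lam = ((n - m : ℕ) : ℝ) * sigmaV m lam := by
  have h : ∀ i : Fin n, sigmaVd m i lam
      = ∑ s ∈ Finset.powersetCard m (Finset.univ : Finset (Fin n)),
          (if i ∈ s then 0 else ∏ j ∈ s, lam j) := by
    intro i
    rw [sigmaVd_eq_filter, Finset.sum_filter]
    apply Finset.sum_congr rfl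
    intro s _
    by_cases hi : i ∈ s <;> simp [hi]
  simp only [h]
  rw [Finset.sum_comm]
  unfold sigmaV
  rw [Finset.mul_sum]
  apply Finset.sum_congr rfl
  intro s hs
  rw [Finset.mem_powersetCard] at hs
  rw [Finset.sum_ite, Finset.sum_const, Finset.sum_const]
  have hcard : (Finset.univ.filter (fun x : Fin n => ¬ x ∈ s)).card = n - m := by
    rw [Finset.filter_not, Finset.card_sdiff_of_subset (Finset.filter_subset _ _)]
    rw [Finset.card_univ, Fintype.card_fin]
    congr 1
    rw [Finset.filter_mem_eq_inter, Finset.univ_inter, hs.2]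
  rw [hcard]
  simp

-- I3
lemma sum_mul_sigmaVd {n : ℕ} (m : ℕ) (hmn : m + 1 ≤ n) (lam : Fin n → ℝ) :
    ∑ i, lam i * sigmaVd m i lam = ((m + 1 : ℕ) : ℝ) * sigmaV (m+1) lam := by
  have h : ∀ i : Fin n, lam i * sigmaVd m i lam = sigmaV (m+1) lam - sigmaVd (m+1) i lam := by
    intro i
    rw [sigmaV_succ m i lam]; ring
  simp only [h]
  rw [Finset.sum_sub_distrib, sum_sigmaVd, Finset.sum_const, Finset.card_univ, Fintype.card_fin]
  have : ((n - (m+1) : ℕ) : ℝ) = (n : ℝ) - (m+1 : ℕ) := by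
    rw [Nat.cast_sub hmn]
  rw [this]
  push_cast
  ring

-- homogeneity
lemma sigmaV_smul {n : ℕ} (m : ℕ) (c : ℝ) (lam : Fin n → ℝ) :
    sigmaV m (fun j => c * lam j) = c ^ m * sigmaV m lam := by
  unfold sigmaV
  rw [Finset.mul_sum]
  apply Finset.sum_congr rfl
  intro s hs
  rw [Finset.mem_powersetCard] at hs
  rw [Finset.prod_mul_distrib, Finset.prod_const, hs.2]

-- counting lemma
lemma card_supersets {n : ℕ} (m : ℕ) (T : Finset (Fin n)) (hTm : T.card ≤ m) :
    ((Finset.powersetCard m (Finset.univ : Finset (Fin n))).filter (fun A => T ⊆ A)).card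
      = (n - T.card).choose (m - T.card) := by
  have : ((Finset.powersetCard m (Finset.univ : Finset (Fin n))).filter (fun A => T ⊆ A)).card
      = (Finset.powersetCard (m - T.card) (Finset.univ \ T)).card := by
    apply Finset.card_bij' (fun A _ => A \ T) (fun B _ => B ∪ T)
    · intro A hA
      simp only [Finset.mem_filter, Finset.mem_powersetCard] at hA
      rw [Finset.mem_powersetCard]
      refine ⟨Finset.sdiff_subset_sdiff hA.1.1 le_rfl, ?_⟩
      rw [Finset.card_sdiff_of_subset hA.2, hA.1.2]
    · intro B hB
      rw [Finset.mem_powersetCard] at hB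
      have hd : Disjoint B T := Finset.disjoint_of_subset_left hB.1 Finset.sdiff_disjoint
      simp only [Finset.mem_filter, Finset.mem_powersetCard]
      refine ⟨⟨fun x _ => Finset.mem_univ x, ?_⟩, Finset.subset_union_right⟩
      rw [Finset.card_union_of_disjoint hd, hB.2]
      omega
    · intro A hA
      simp only [Finset.mem_filter] at hA
      exact Finset.sdiff_union_of_subset hA.2
    · intro B hB
      rw [Finset.mem_powersetCard] at hB
      have hd : Disjoint B T := Finset.disjoint_of_subset_left hB.1 Finset.sdiff_disjoint
      exact Finset.union_sdiff_cancel_right hd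
  rw [this, Finset.card_powersetCard, Finset.card_sdiff_of_subset (Finset.subset_univ T),
     Finset.card_univ, Fintype.card_fin]
-- shift expansion
lemma sigmaV_add_const {n : ℕ} (m : ℕ) (hmn : m ≤ n) (s : ℝ) (lam : Fin n → ℝ) :
    sigmaV m (fun j => lam j + s)
      = ∑ l ∈ Finset.range (m+1),
          ((n - l).choose (m - l) : ℝ) * s ^ (m - l) * sigmaV l lam := by
  unfold sigmaV
  have hexp : ∀ A ∈ Finset.powersetCard m (Finset.univ : Finset (Fin n)),
      (∏ j ∈ A, (lam j + s)) = ∑ T ∈ A.powerset, (∏ j ∈ T, lam j) * s ^ (m - T.card) := by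
    intro A hA
    rw [Finset.mem_powersetCard] at hA
    rw [Finset.prod_add]
    apply Finset.sum_congr rfl
    intro T hT
    rw [Finset.mem_powerset] at hT
    congr 1
    rw [Finset.prod_const, Finset.card_sdiff_of_subset hT, hA.2]
  rw [Finset.sum_congr rfl hexp]
  rw [Finset.sum_comm' (s := Finset.powersetCard m (Finset.univ : Finset (Fin n)))
    (t := fun A => A.powerset)
    (t' := (Finset.univ : Finset (Fin n)).powerset)
    (s' := fun T => (Finset.powersetCard m (Finset.univ : Finset (Fin n))).filter (fun A => T ⊆ A))
    (by
      intro A T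
      simp only [Finset.mem_powersetCard, Finset.mem_powerset, Finset.mem_filter]
      constructor
      · rintro ⟨⟨h1, h2⟩, h3⟩
        exact ⟨⟨⟨h1, h2⟩, h3⟩, h3.trans h1⟩
      · rintro ⟨⟨⟨h1, h2⟩, h3⟩, h4⟩
        exact ⟨⟨h1, h2⟩, h3⟩)]
  rw [Finset.sum_powerset]
  rw [Finset.card_univ, Fintype.card_fin]
  -- now: ∑ l ∈ range (n+1), ∑ T ∈ powersetCard l univ, ∑ A ∈ filter.., (∏ T lam) * s^(m - #T)
  have hterm : ∀ l ∈ Finset.range (n+1),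
      (∑ T ∈ Finset.powersetCard l (Finset.univ : Finset (Fin n)),
        ∑ _A ∈ (Finset.powersetCard m (Finset.univ : Finset (Fin n))).filter (fun A => T ⊆ A),
          (∏ j ∈ T, lam j) * s ^ (m - T.card))
      = (if l ≤ m then ((n - l).choose (m - l) : ℝ) * s ^ (m - l) *
          (∑ T ∈ Finset.powersetCard l (Finset.univ : Finset (Fin n)), ∏ j ∈ T, lam j) else 0) := by
    intro l hl
    by_cases hlm : l ≤ m
    · rw [if_pos hlm, Finset.mul_sum]
      apply Finset.sum_congr rfl
      intro T hT
      rw [Finset.mem_powersetCard] at hT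
      rw [Finset.sum_const, card_supersets m T (hT.2 ▸ hlm), hT.2]
      rw [nsmul_eq_mul]
      ring
    · rw [if_neg hlm]
      apply Finset.sum_eq_zero
      intro T hT
      rw [Finset.mem_powersetCard] at hT
      have : (Finset.powersetCard m (Finset.univ : Finset (Fin n))).filter (fun A => T ⊆ A) = ∅ := by
        apply Finset.filter_eq_empty_iff.mpr
        intro A hA hTA
        rw [Finset.mem_powersetCard] at hA
        have := Finset.card_le_card hTA
        omega
      rw [this, Finset.sum_empty]
  rw [Finset.sum_congr rfl hterm]
  rw [Finset.sum_ite, Finset.sum_const_zero, add_zero]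
  have hfil : (Finset.range (n+1)).filter (fun l => l ≤ m) = Finset.range (m+1) := by
    ext l
    simp only [Finset.mem_filter, Finset.mem_range]
    omega
  rw [hfil]

-- positivity corollary 1: strict sigma_m, s ≥ 0
lemma sigmaV_add_const_pos {n : ℕ} (m : ℕ) (hm : 1 ≤ m) (hmn : m ≤ n) {s : ℝ}
    (hs : 0 ≤ s) (lam : Fin n → ℝ)
    (hnn : ∀ l, 1 ≤ l → l < m → 0 ≤ sigmaV l lam) (hpos : 0 < sigmaV m lam) :
    0 < sigmaV m (fun j => lam j + s) := by
  rw [sigmaV_add_const m hmn s lam]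
  rw [Finset.sum_range_succ]
  have h1 : ((n - m).choose (m - m) : ℝ) * s ^ (m - m) * sigmaV m lam = sigmaV m lam := by
    simp
  rw [h1]
  have h2 : 0 ≤ ∑ l ∈ Finset.range m,
      ((n - l).choose (m - l) : ℝ) * s ^ (m - l) * sigmaV l lam := by
    apply Finset.sum_nonneg
    intro l hl
    rw [Finset.mem_range] at hl
    rcases Nat.eq_zero_or_pos l with h0 | h0
    · subst h0
      have : sigmaV 0 lam = 1 := by simp [sigmaV]
      rw [this]
      positivity
    · have := hnn l h0 hl
      positivity
  linarith

-- positivity corollary 2: nonneg sigmas, s > 0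
lemma sigmaV_add_const_pos' {n : ℕ} (m : ℕ) (hm : 1 ≤ m) (hmn : m ≤ n) {s : ℝ}
    (hs : 0 < s) (lam : Fin n → ℝ)
    (hnn : ∀ l, 1 ≤ l → l ≤ m → 0 ≤ sigmaV l lam) :
    0 < sigmaV m (fun j => lam j + s) := by
  rw [sigmaV_add_const m hmn s lam]
  rw [Finset.range_eq_Ico, Finset.sum_eq_sum_Ico_succ_bot (by omega : 0 < m + 1)]
  have h0 : sigmaV 0 lam = 1 := by simp [sigmaV]
  have hchoose : 0 < (n.choose m : ℝ) := by
    exact_mod_cast Nat.choose_pos hmn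
  have h1 : 0 < ((n - 0).choose (m - 0) : ℝ) * s ^ (m - 0) * sigmaV 0 lam := by
    simp only [Nat.sub_zero, h0, mul_one]
    positivity
  have h2 : 0 ≤ ∑ l ∈ Finset.Ico 1 (m+1),
      ((n - l).choose (m - l) : ℝ) * s ^ (m - l) * sigmaV l lam := by
    apply Finset.sum_nonneg
    intro l hl
    rw [Finset.mem_Ico] at hl
    have := hnn l hl.1 (by omega)
    positivity
  linarith
lemma continuous_sigmaVd_comp {n : ℕ} (m : ℕ) (i : Fin n) {g : ℝ → Fin n → ℝ}
    (hg : ∀ j, Continuous fun t => g t j) :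
    Continuous fun t => sigmaVd m i (g t) := by
  unfold sigmaVd sigmaV
  apply continuous_finset_sum
  intro s _
  apply continuous_finset_prod
  intro j _
  rcases eq_or_ne j i with rfl | hne
  · simpa using continuous_const
  · simpa [Function.update_apply, hne] using hg j

lemma sigmaVd_one_const {n : ℕ} (m : ℕ) (i : Fin n) :
    sigmaVd m i (fun _ => (1:ℝ)) = ((n-1).choose m : ℝ) := by
  rw [sigmaVd_eq]
  simp only [Finset.prod_const_one, Finset.sum_const, nsmul_eq_mul, mul_one]
  rw [Finset.card_powersetCard, Finset.card_erase_of_mem (Finset.mem_univ i),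
    Finset.card_univ, Fintype.card_fin]

lemma key {n : ℕ} : ∀ (k : ℕ), 1 ≤ k → k ≤ n → ∀ lam : Fin n → ℝ, GammaV k lam →
    ∀ i, 0 < sigmaVd (k-1) i lam := by
  intro k
  induction k using Nat.strong_induction_on with
  | _ k IH =>
  intro hk hkn lam hG i
  rcases k with _ | _ | m
  · omega
  · have : sigmaVd 0 i lam = 1 := by
      simp [sigmaVd, sigmaV]
    rw [this]; norm_num
  -- k = m + 2
  have hkn' : m + 2 ≤ n := hkn
  set g : ℝ → Fin n → ℝ := fun t j => t * lam j + (1 - t) with hg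
  set h : ℝ → ℝ := fun t => sigmaVd (m+1) i (g t) with hh
  have hcont : Continuous h := by
    apply continuous_sigmaVd_comp
    intro j
    simp only [hg]
    continuity
  have hg0 : g 0 = fun _ => (1:ℝ) := by funext j; simp [hg]
  have hg1 : g 1 = lam := by funext j; simp [hg]
  have h0pos : 0 < h 0 := by
    rw [hh]
    simp only [hg0]
    rw [sigmaVd_one_const]
    have : 0 < (n-1).choose (m+1) := Nat.choose_pos (by omega)
    exact_mod_cast this
  have hne : ∀ t ∈ Set.Icc (0:ℝ) 1, h t ≠ 0 := by
    intro t ht hzero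
    have ht0 : 0 < t := by
      rcases lt_or_eq_of_le ht.1 with h' | h'
      · exact h'
      · exfalso; rw [← h'] at hzero; exact h0pos.ne' hzero
    have hGν : GammaV (m+2) (g t) := by
      intro p hp hpk
      have hν : g t = fun j => t * (lam j + (1-t)/t) := by
        funext j
        field_simp [hg]
        ring
      rw [hν, sigmaV_smul]
      apply mul_pos (pow_pos ht0 p)
      exact sigmaV_add_const_pos p hp (le_trans hpk hkn')
        (div_nonneg (by linarith [ht.2]) ht0.le) lam
        (fun l hl hlm => (hG l hl (le_trans hlm.le (le_trans hpk le_rfl))).le)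
        (hG p hp hpk)
    set w := Function.update (g t) i 0 with hw
    have hsid : ∀ l, sigmaVd l i (g t) = sigmaV l w := fun l => rfl
    have hw_m : ∀ l, 1 ≤ l → l ≤ m → 0 < sigmaV l w := by
      intro l hl hlm
      have := IH (l+1) (by omega) (by omega) (by omega) (g t)
        (fun p hp hpk => hGν p hp (by omega)) i
      simpa [hsid] using this
    have hwm1 : sigmaV (m+1) w = 0 := by rw [← hsid]; exact hzero
    have hσk : sigmaV (m+2) w = sigmaV (m+2) (g t) := by
      have h2 := sigmaV_succ (m+1) i (g t)
      rw [hsid, hsid, hwm1, mul_zero, zero_add] at h2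
      exact h2.symm
    have hkpos : 0 < sigmaV (m+2) w := by
      rw [hσk]; exact hGν (m+2) (by omega) le_rfl
    have hsq : ∑ j, w j ^ 2 * sigmaVd m j w = -(((m+2 : ℕ)):ℝ) * sigmaV (m+2) w := by
      have hterm : ∀ j, w j ^ 2 * sigmaVd m j w = -(w j * sigmaVd (m+1) j w) := by
        intro j
        have h3 := sigmaV_succ m j w
        rw [hwm1] at h3
        linear_combination (-(w j)) * h3
      rw [Finset.sum_congr rfl (fun j _ => hterm j), Finset.sum_neg_distrib]
      have h4 := sum_mul_sigmaVd (m+1) (by omega) w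
      rw [h4]
      push_cast
      ring
    have hex : ∃ j, w j ^ 2 * sigmaVd m j w < 0 := by
      by_contra hcon
      push_neg at hcon
      have hnn := Finset.sum_nonneg (fun j (_ : j ∈ Finset.univ) => hcon j)
      rw [hsq] at hnn
      have : (0:ℝ) < ((m+2:ℕ):ℝ) := by positivity
      nlinarith
    obtain ⟨j, hj⟩ := hex
    have hneg : sigmaVd m j w < 0 := by nlinarith [sq_nonneg (w j)]
    have hlim : 0 ≤ sigmaVd m j w := by
      have hF : ∀ ε : ℝ, 0 < ε → 0 < sigmaVd m j (fun x => w x + ε) := by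
        intro ε hε
        have hGw : GammaV (m+1) (fun x => w x + ε) := by
          intro p hp hpk
          apply sigmaV_add_const_pos' p hp (by omega) hε w
          intro l hl hlm
          rcases Nat.lt_or_ge l (m+1) with h' | h'
          · exact (hw_m l hl (by omega)).le
          · have : l = m + 1 := by omega
            rw [this, hwm1]
        have h5 := IH (m+1) (by omega) (by omega) (by omega) (fun x => w x + ε) hGw j
        simpa using h5
      have hcont2 : Continuous fun ε : ℝ => sigmaVd m j (fun x => w x + ε) := by
        apply continuous_sigmaVd_comp
        intro x
        continuity
      have htend : Filter.Tendsto (fun ε : ℝ => sigmaVd m j (fun x => w x + ε))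
          (nhdsWithin 0 (Set.Ioi 0)) (nhds (sigmaVd m j (fun x => w x + 0))) :=
        ((hcont2.tendsto 0).mono_left nhdsWithin_le_nhds)
      have heq : (fun x => w x + (0:ℝ)) = w := funext fun x => add_zero _
      rw [heq] at htend
      exact ge_of_tendsto htend
        (Filter.eventually_of_mem self_mem_nhdsWithin (fun ε hε => (hF ε hε).le))
    linarith
  -- IVT conclusion
  by_contra hle
  push_neg at hle
  have hgoal : sigmaVd (m + 1 + 1 - 1) i lam = h 1 := by
    show sigmaVd (m+1) i lam = sigmaVd (m+1) i (g 1)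
    rw [hg1]
  rw [hgoal] at hle
  have h1ne : h 1 ≠ 0 := hne 1 (by norm_num)
  have h1lt : h 1 < 0 := lt_of_le_of_ne hle h1ne
  have hmem : (0:ℝ) ∈ Set.Icc (h 1) (h 0) := ⟨h1lt.le, h0pos.le⟩
  obtain ⟨t, htmem, htzero⟩ :=
    intermediate_value_Icc' (by norm_num : (0:ℝ) ≤ 1) hcont.continuousOn hmem
  exact hne t htmem htzero
lemma sigmaV_one {n : ℕ} (lam : Fin n → ℝ) : sigmaV 1 lam = ∑ i, lam i := by
  unfold sigmaV
  rw [Finset.powersetCard_one, Finset.sum_map]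
  simp


end AuxLemmas

/-- For λ ∈ Γ_k with λ_1 ≥ ⋯ ≥ λ_n, λ_1 σ_{k−1}(λ|1) ≥ (k/n) σ_k(λ). -/
theorem statement_15 (n k : ℕ) (hk : 1 ≤ k) (hkn : k ≤ n)
    (lam : Fin n → ℝ) (hΓ : GammaV k lam)
    (hsort : ∀ i j : Fin n, i ≤ j → lam j ≤ lam i) :
    (k : ℝ) / (n : ℝ) * sigmaV k lam ≤
      lam (⟨0, by omega⟩ : Fin n) * sigmaVd (k-1) (⟨0, by omega⟩ : Fin n) lam := by
  obtain ⟨m, rfl⟩ : ∃ m, k = m + 1 := ⟨k - 1, by omega⟩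
  set i0 : Fin n := ⟨0, by omega⟩ with hi0
  show ((m+1 : ℕ) : ℝ) / (n : ℝ) * sigmaV (m+1) lam ≤ lam i0 * sigmaVd m i0 lam
  set a := lam i0 with ha'
  have hle0 : ∀ j, lam j ≤ a := fun j => hsort i0 j (by simp [hi0, Fin.le_def])
  have ha : 0 < a := by
    have h1 : 0 < sigmaV 1 lam := hΓ 1 le_rfl hk
    rw [sigmaV_one] at h1
    by_contra hcon
    push_neg at hcon
    have : ∑ j, lam j ≤ 0 :=
      Finset.sum_nonpos (fun j _ => le_trans (hle0 j) hcon)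
    linarith
  have hB : 0 < sigmaVd m i0 lam := by
    have := key (m+1) hk hkn lam hΓ i0
    simpa using this
  have hk0 : sigmaV (m+1) lam = a * sigmaVd m i0 lam + sigmaVd (m+1) i0 lam :=
    sigmaV_succ m i0 lam
  have hσpos : 0 < sigmaV (m+1) lam := hΓ (m+1) hk le_rfl
  have hnpos : (0:ℝ) < (n:ℝ) := by exact_mod_cast (by omega : 0 < n)
  have hKpos : (0:ℝ) < ((m+1:ℕ):ℝ) := by positivity
  have hKN : ((m+1:ℕ):ℝ) ≤ (n:ℝ) := by exact_mod_cast hkn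
  rcases le_or_gt (sigmaVd (m+1) i0 lam) 0 with hc | hc
  · -- easy case
    have h1 : sigmaV (m+1) lam ≤ a * sigmaVd m i0 lam := by linarith
    have h2 : ((m+1:ℕ):ℝ) / (n:ℝ) ≤ 1 := by
      rw [div_le_one hnpos]; exact hKN
    nlinarith
  · -- main case
    set w := Function.update lam i0 0 with hw
    have hsid : ∀ l, sigmaVd l i0 lam = sigmaV l w := fun l => rfl
    have hw0 : w i0 = 0 := by rw [hw]; simp
    have hw_a : ∀ j, w j ≤ a := by
      intro j
      rcases eq_or_ne j i0 with rfl | hne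
      · rw [hw0]; exact ha.le
      · rw [hw, Function.update_of_ne hne]; exact hle0 j
    have hGw : GammaV (m+1) w := by
      intro p hp hpk
      rcases Nat.lt_or_ge p (m+1) with h' | h'
      · have := key (p+1) (by omega) (by omega) lam
          (fun q hq hqk => hΓ q hq (by omega)) i0
        rw [← hsid]
        simpa using this
      · have : p = m + 1 := by omega
        rw [this, ← hsid]
        exact hc
    have hkey_w : ∀ j, 0 < sigmaVd m j w := by
      intro j
      have := key (m+1) hk hkn w hGw j
      simpa using this
    have hI3 : ∑ j, w j * sigmaVd m j w = ((m+1:ℕ):ℝ) * sigmaV (m+1) w :=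
      sum_mul_sigmaVd m hkn w
    have hI4 : ∑ j, sigmaVd m j w = ((n - m:ℕ):ℝ) * sigmaV m w := sum_sigmaVd m w
    have hii : sigmaVd m i0 w = sigmaV m w := by
      unfold sigmaVd
      rw [hw, Function.update_idem]
    -- split sums at i0
    have hsplit1 : ∑ j, w j * sigmaVd m j w
        = ∑ j ∈ Finset.univ.erase i0, w j * sigmaVd m j w := by
      rw [← Finset.add_sum_erase Finset.univ _ (Finset.mem_univ i0), hw0, zero_mul, zero_add]
    have hsplit2 : ∑ j ∈ Finset.univ.erase i0, sigmaVd m j w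
        = ((n - m:ℕ):ℝ) * sigmaV m w - sigmaV m w := by
      have := Finset.add_sum_erase Finset.univ (fun j => sigmaVd m j w) (Finset.mem_univ i0)
      rw [hI4] at this
      have h6 : sigmaVd m i0 w + ∑ x ∈ Finset.univ.erase i0, sigmaVd m x w
          = ((n - m:ℕ):ℝ) * sigmaV m w := this
      rw [← h6, hii]
      ring
    have hbound : ∑ j ∈ Finset.univ.erase i0, w j * sigmaVd m j w
        ≤ a * (((n - m:ℕ):ℝ) * sigmaV m w - sigmaV m w) := by
      rw [← hsplit2, Finset.mul_sum]
      apply Finset.sum_le_sum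
      intro j _
      exact mul_le_mul_of_nonneg_right (hw_a j) (hkey_w j).le
    have hmain : ((m+1:ℕ):ℝ) * sigmaV (m+1) w
        ≤ a * (((n:ℝ) - ((m+1:ℕ):ℝ))) * sigmaV m w := by
      have hcast : ((n - m:ℕ):ℝ) = (n:ℝ) - (m:ℝ) := by
        rw [Nat.cast_sub (by omega)]
      rw [← hI3, hsplit1]
      calc ∑ j ∈ Finset.univ.erase i0, w j * sigmaVd m j w
          ≤ a * (((n - m:ℕ):ℝ) * sigmaV m w - sigmaV m w) := hbound
        _ = a * ((n:ℝ) - ((m+1:ℕ):ℝ)) * sigmaV m w := by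
            rw [hcast]; push_cast; ring
    -- conclude
    have hfin : ((m+1:ℕ):ℝ) * sigmaV (m+1) lam ≤ (n:ℝ) * (a * sigmaV m w) := by
      have hexp : sigmaV (m+1) lam = a * sigmaV m w + sigmaV (m+1) w := by
        rw [hk0, hsid, hsid]
      rw [hexp]
      nlinarith [hmain]
    rw [div_mul_eq_mul_div, div_le_iff₀ hnpos, hsid]
    calc ((m+1:ℕ):ℝ) * sigmaV (m+1) lam ≤ (n:ℝ) * (a * sigmaV m w) := hfin
      _ = a * sigmaV m w * (n:ℝ) := by ring
end
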